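/- arXiv:2604.03745 — 2 statements merged into one kernel-verified Lean document; each statement's English description precedes it below -/
import Mathlib

section
/- Let X be a set, h : X → ℝ a function, ℓ ≥ 1, and let φ_1,…,φ_ℓ : X → X be maps with associated real numbers d_1,…,d_ℓ, each d_i ≥ 2. Suppose C ≥ 0 satisfies |h(φ_i(x))/d_i − h(x)| ≤ C for all x ∈ X and all 1 ≤ i ≤ ℓ. Then for every sequence γ = (γ_m)_{m≥1} with γ_m ∈ {1,…,ℓ} and every x ∈ X: (a) the limit ĥ_γ(x) = lim_{n→∞} h(φ_{γ_n} ∘ ⋯ ∘ φ_{γ_1}(x)) / (d_{γ_1}·d_{γ_2}⋯d_{γ_n}) exists; (b) ĥ_{γ'}(φ_{γ_1}(x)) = d_{γ_1}·ĥ_γ(x), where γ' = (γ_{m+1})_{m≥1} is the shifted sequence; and (c) |ĥ_γ(x) − h(x)| ≤ C/(1 − 1/min_{1≤i≤ℓ} d_i). -/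
open scoped BigOperators

noncomputable section

/-- A family of pairwise inequivalent nontrivial absolute values on a field `k`
with finite support satisfying the product formula.  For a number field `k` such a
family is, up to a common positive power, the canonically normalized family of all
places of `k` (by the Artin–Whaples theorem), so that `M.V` plays the role of the
set `M_k` of places of `k`. -/
structure PlaceFamily (k : Type) [Field k] where
  V : Type
  av : V → AbsoluteValue k ℝ
  nontriv : ∀ v : V, ∃ x : k, x ≠ 0 ∧ av v x ≠ 1
  pairwise_inequiv : ∀ v w : V, v ≠ w → ¬∃ t : ℝ, 0 < t ∧ ∀ x : k, av w x = av v x ^ t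
  finite_support : ∀ x : k, x ≠ 0 → {v : V | av v x ≠ 1}.Finite
  product_formula : ∀ x : k, x ≠ 0 → (∑ᶠ v : V, Real.log (av v x)) = 0

namespace PlaceFamily

variable {k : Type} [Field k]

/-- The place `v` is nonarchimedean; the archimedean places are those which are not. -/
def NonarchAt (M : PlaceFamily k) (v : M.V) : Prop :=
  ∀ x y : k, M.av v (x + y) ≤ max (M.av v x) (M.av v y)

/-- `max_j |a_j|_v` for a tuple of homogeneous coordinates. -/
def maxAbs (M : PlaceFamily k) {N : ℕ} (v : M.V) (a : Fin (N + 1) → k) : ℝ :=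
  Finset.univ.sup' ⟨0, Finset.mem_univ 0⟩ fun j => M.av v (a j)

/-- The Weil height `h(P) = ∑_v log max_j |a_j|_v` of a point of `ℙ^N(k)` given by
homogeneous coordinates. -/
def height (M : PlaceFamily k) {N : ℕ} (a : Fin (N + 1) → k) : ℝ :=
  ∑ᶠ v : M.V, Real.log (M.maxAbs v a)

/-- The local height `λ_v(D_I, P) = ∑_{i ∈ I} log (max_j |a_j|_v / |a_i|_v)` relative to
the divisor `D_I = ∑_{i ∈ I} (X_i = 0)`. -/
def localHt (M : PlaceFamily k) {N : ℕ} (I : Finset (Fin (N + 1))) (v : M.V)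
    (a : Fin (N + 1) → k) : ℝ :=
  ∑ i ∈ I, Real.log (M.maxAbs v a / M.av v (a i))

/-- `∑_{v ∉ S} λ_v(D_I, ·)`. -/
def sumOutside (M : PlaceFamily k) {N : ℕ} (I : Finset (Fin (N + 1))) (S : Set M.V)
    (a : Fin (N + 1) → k) : ℝ :=
  ∑ᶠ v ∈ Sᶜ, M.localHt I v a

end PlaceFamily

variable {k : Type} [Field k]

/-- Two coordinate tuples represent the same point of projective space. -/
def projEq (k : Type) [Field k] {n : ℕ} (a b : Fin n → k) : Prop :=
  ∃ t : k, t ≠ 0 ∧ b = t • a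

/-- A proper Zariski-closed subset of `ℙ^N`, described on homogeneous coordinates:
the common zero locus of a family of homogeneous polynomials which is avoided by
some point of `ℙ^N(k)`. -/
def IsZariskiClosedProper {N : ℕ} (Z : Set (Fin (N + 1) → k)) : Prop :=
  (∃ 𝒢 : Set (MvPolynomial (Fin (N + 1)) k),
      (∀ G ∈ 𝒢, ∃ d : ℕ, G.IsHomogeneous d) ∧
        Z = {a : Fin (N + 1) → k | ∀ G ∈ 𝒢, MvPolynomial.eval a G = 0}) ∧
    ∃ a : Fin (N + 1) → k, a ≠ 0 ∧ a ∉ Z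

/-- An endomorphism of `ℙ^N` of degree `deg` defined over `k`: it is given by `N + 1`
homogeneous polynomials of degree `deg` with no common zero other than the origin over
an algebraic closure of `k`. -/
structure ProjEndo (k : Type) [Field k] (N : ℕ) where
  deg : ℕ
  coord : Fin (N + 1) → MvPolynomial (Fin (N + 1)) k
  homogeneous : ∀ j, (coord j).IsHomogeneous deg
  no_common_zero :
    ∀ x : Fin (N + 1) → AlgebraicClosure k,
      (∀ j, MvPolynomial.eval x
        (MvPolynomial.map (algebraMap k (AlgebraicClosure k)) (coord j)) = 0) → x = 0

/-- Action of an endomorphism on homogeneous coordinates. -/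
def ProjEndo.app {N : ℕ} (φ : ProjEndo k N) (a : Fin (N + 1) → k) : Fin (N + 1) → k :=
  fun j => MvPolynomial.eval a (φ.coord j)

/-- The element of the semigroup `𝓕` generated by `φ 0, …, φ (ℓ-1)` corresponding to a
word in the generators, acting on homogeneous coordinates; the empty word is the
identity, so that words `≠ []` represent the elements of `𝓕 ∖ {id}`. -/
def wordApp {N ℓ : ℕ} (φ : Fin ℓ → ProjEndo k N) :
    List (Fin ℓ) → (Fin (N + 1) → k) → Fin (N + 1) → k
  | [] => fun a => a
  | i :: w => fun a => (φ i).app (wordApp φ w a)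

/-- The (multiplicative) degree of the element of `𝓕` given by a word. -/
def wordDeg {N ℓ : ℕ} (φ : Fin ℓ → ProjEndo k N) (w : List (Fin ℓ)) : ℕ :=
  (w.map fun i => (φ i).deg).prod

/-- Coordinate polynomials of the composition along a word. -/
def wordPoly {N ℓ : ℕ} (φ : Fin ℓ → ProjEndo k N) :
    List (Fin ℓ) → Fin (N + 1) → MvPolynomial (Fin (N + 1)) k
  | [] => fun j => MvPolynomial.X j
  | i :: w => fun j => MvPolynomial.bind₁ (wordPoly φ w) ((φ i).coord j)

/-- Iterates of a single endomorphism acting on homogeneous coordinates. -/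
def iterApp {N : ℕ} (f : ProjEndo k N) : ℕ → (Fin (N + 1) → k) → Fin (N + 1) → k
  | 0 => fun a => a
  | n + 1 => fun a => f.app (iterApp f n a)

/-- Homogeneous coordinates `[1 : u_1 : ⋯ : u_N]` of an element of `𝔾_m^N(k) ⊆ ℙ^N(k)`. -/
def unitCoords {N : ℕ} (u : Fin N → kˣ) : Fin (N + 1) → k :=
  Fin.cons 1 fun i => (u i : k)

/-- The multiplicative relation `a^r = u ⬝ b^s` between the points of `ℙ^N(k)` with
homogeneous coordinates `a` and `b`, where `u ∈ 𝔾_m^N(k)`. -/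
def MultRel {N : ℕ} (a b : Fin (N + 1) → k) (r s : ℤ) (u : Fin N → kˣ) : Prop :=
  ∃ t : k, t ≠ 0 ∧ ∀ j, a j ^ r = t * unitCoords u j * b j ^ s

/-- Hypothesis `(Hyp_ε)` for the divisor `D_I`, instantiated at the finite set `S` of
places and the Zariski-closed set `Z = Z_{ε,D,S}`: every point `φ(P)` with
`φ ∈ 𝓕 ∖ {id}`, `φ(P) ∉ |D_I|` and `∑_{v ∉ S} λ_v(D_I, φ(P)) < ε·h(D_I, φ(P))`
lies in `Z`.  (Here `h(D_I, ·) = #I · h(·)`.) -/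
def HypAt {N ℓ : ℕ} (M : PlaceFamily k) (φ : Fin ℓ → ProjEndo k N) (ε : ℝ)
    (I : Finset (Fin (N + 1))) (S : Set M.V) (Z : Set (Fin (N + 1) → k)) : Prop :=
  ∀ a : Fin (N + 1) → k, a ≠ 0 → ∀ w : List (Fin ℓ), w ≠ [] →
    (∀ i ∈ I, wordApp φ w a i ≠ 0) →
    M.sumOutside I S (wordApp φ w a) < ε * ((I.card : ℝ) * M.height (wordApp φ w a)) →
    wordApp φ w a ∈ Z

/-- Hypothesis `(Hyp_ε)` for the semigroup generated by a single map. -/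
def HypIter {N : ℕ} (M : PlaceFamily k) (f : ProjEndo k N) (ε : ℝ)
    (I : Finset (Fin (N + 1))) (S : Set M.V) (Z : Set (Fin (N + 1) → k)) : Prop :=
  ∀ a : Fin (N + 1) → k, a ≠ 0 → ∀ n : ℕ, 1 ≤ n →
    (∀ i ∈ I, iterApp f n a i ≠ 0) →
    M.sumOutside I S (iterApp f n a) < ε * ((I.card : ℝ) * M.height (iterApp f n a)) →
    iterApp f n a ∈ Z

/-- The linear form with coefficient vector `c`. -/
def linForm {N : ℕ} (c : Fin (N + 1) → k) : MvPolynomial (Fin (N + 1)) k :=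
  ∑ j : Fin (N + 1), MvPolynomial.C (c j) * MvPolynomial.X j

/-- A family of linear forms (given by coefficient vectors) is in general position if
any `N + 1` of them are linearly independent. -/
def InGeneralPosition {N q : ℕ} (L : Fin q → Fin (N + 1) → k) : Prop :=
  ∀ T : Finset (Fin q), T.card = N + 1 → LinearIndependent k fun t : T => L t.1

/-- The local height `λ_v(D, P) = log ((max_j |a_j|_v)^{deg G} / |G(a)|_v)` relative to
the hypersurface `D = (G = 0)`, `G` homogeneous of degree `e`. -/
def lamG (M : PlaceFamily k) {N : ℕ} (G : MvPolynomial (Fin (N + 1)) k) (e : ℕ)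
    (v : M.V) (a : Fin (N + 1) → k) : ℝ :=
  Real.log (M.maxAbs v a ^ e / M.av v (MvPolynomial.eval a G))

/-- Composition of an abstract word of self-maps; the empty word is the identity. -/
def compWord {X : Type*} {ℓ : ℕ} (φ : Fin ℓ → X → X) : List (Fin ℓ) → X → X
  | [] => fun x => x
  | i :: w => fun x => φ i (compWord φ w x)

/-- The partial composition `φ_{γ_{n-1}} ∘ ⋯ ∘ φ_{γ_0}` along an infinite word `γ`. -/
def seqComp {X : Type*} {ℓ : ℕ} (φ : Fin ℓ → X → X) (γ : ℕ → Fin ℓ) : ℕ → X → X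
  | 0 => fun x => x
  | n + 1 => fun x => φ (γ n) (seqComp φ γ n x)

end

/-- **Canonical heights for infinite words (Tate limit construction).**
If `h : X → ℝ` and `φ_1, …, φ_ℓ : X → X` have "degrees" `d_i ≥ 2` with
`|h(φ_i x)/d_i − h x| ≤ C` for all `x, i`, then there is a canonical height
`ĥ : (infinite words γ) → X → ℝ` such that:
(a) for every `γ` and `x`, `h(φ_{γ_{n-1}} ∘ ⋯ ∘ φ_{γ_0}(x)) / (d_{γ_0} ⋯ d_{γ_{n-1}})`
converges to `ĥ γ x` as `n → ∞`;
(b) `ĥ γ' (φ_{γ_0} x) = d_{γ_0} · ĥ γ x` where `γ'` is the shift of `γ`; and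
(c) `|ĥ γ x − h x| ≤ C / (1 − 1/min_i d_i)`, uniformly in `γ`. -/
theorem canonical_height_for_infinite_words
    {X : Type*} (h : X → ℝ) {ℓ : ℕ} (hl : 1 ≤ ℓ)
    (φ : Fin ℓ → X → X) (d : Fin ℓ → ℝ) (hd : ∀ i, 2 ≤ d i)
    (C : ℝ) (hC : 0 ≤ C)
    (hcomp : ∀ (x : X) (i : Fin ℓ), |h (φ i x) / d i - h x| ≤ C) :
    ∃ hhat : (ℕ → Fin ℓ) → X → ℝ,
      (∀ (γ : ℕ → Fin ℓ) (x : X),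
        Filter.Tendsto
          (fun n => h (seqComp φ γ n x) / ∏ m ∈ Finset.range n, d (γ m))
          Filter.atTop (nhds (hhat γ x))) ∧
      (∀ (γ : ℕ → Fin ℓ) (x : X),
        hhat (fun m => γ (m + 1)) (φ (γ 0) x) = d (γ 0) * hhat γ x) ∧
      (∀ (γ : ℕ → Fin ℓ) (x : X),
        |hhat γ x - h x| ≤
          C / (1 - 1 /
            Finset.univ.inf' (Finset.univ_nonempty_iff.mpr (Fin.pos_iff_nonempty.mp hl)) d)) := by
  classical
  set D : ℝ :=
    Finset.univ.inf' (Finset.univ_nonempty_iff.mpr (Fin.pos_iff_nonempty.mp hl)) d with hDdef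
  have hD2 : (2 : ℝ) ≤ D := Finset.le_inf' _ _ fun i _ => hd i
  have hDpos : (0 : ℝ) < D := by linarith
  have hDle : ∀ i, D ≤ d i := fun i => Finset.inf'_le _ (Finset.mem_univ i)
  have hdpos : ∀ i, (0 : ℝ) < d i := fun i => by linarith [hd i]
  set r : ℝ := 1 / D with hrdef
  have hr : r < 1 := by
    rw [hrdef, div_lt_one hDpos]; linarith
  set f : (ℕ → Fin ℓ) → X → ℕ → ℝ := fun γ x n =>
    h (seqComp φ γ n x) / ∏ m ∈ Finset.range n, d (γ m) with hfdef
  have hPpos : ∀ (γ : ℕ → Fin ℓ) (n : ℕ), 0 < ∏ m ∈ Finset.range n, d (γ m) :=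
    fun γ n => Finset.prod_pos fun m _ => hdpos _
  have hPge : ∀ (γ : ℕ → Fin ℓ) (n : ℕ), D ^ n ≤ ∏ m ∈ Finset.range n, d (γ m) := by
    intro γ n
    calc D ^ n = ∏ _m ∈ Finset.range n, D := by simp
      _ ≤ ∏ m ∈ Finset.range n, d (γ m) :=
        Finset.prod_le_prod (fun m _ => le_of_lt hDpos) fun m _ => hDle _
  have hstep : ∀ (γ : ℕ → Fin ℓ) (x : X) (n : ℕ),
      dist (f γ x n) (f γ x (n + 1)) ≤ C * r ^ n := by
    intro γ x n
    have hP := hPpos γ n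
    have hPne : (∏ m ∈ Finset.range n, d (γ m)) ≠ 0 := ne_of_gt hP
    have hdn : d (γ n) ≠ 0 := ne_of_gt (hdpos _)
    have key : f γ x (n + 1) - f γ x n =
        (h (φ (γ n) (seqComp φ γ n x)) / d (γ n) - h (seqComp φ γ n x)) /
          ∏ m ∈ Finset.range n, d (γ m) := by
      simp only [hfdef, Finset.prod_range_succ, seqComp]
      field_simp
    rw [dist_comm, Real.dist_eq, key, abs_div, abs_of_pos hP]
    have h1 : |h (φ (γ n) (seqComp φ γ n x)) / d (γ n) - h (seqComp φ γ n x)| ≤ C :=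
      hcomp _ _
    calc |h (φ (γ n) (seqComp φ γ n x)) / d (γ n) - h (seqComp φ γ n x)| /
          ∏ m ∈ Finset.range n, d (γ m)
        ≤ C / ∏ m ∈ Finset.range n, d (γ m) := by gcongr
      _ ≤ C / D ^ n := by
          apply div_le_div_of_nonneg_left hC (pow_pos hDpos n) (hPge γ n)
      _ = C * r ^ n := by
          rw [hrdef, div_pow, one_pow, mul_one_div]
  have hcau : ∀ (γ : ℕ → Fin ℓ) (x : X), CauchySeq (f γ x) := fun γ x =>
    cauchySeq_of_le_geometric r C hr (hstep γ x)
  choose hhat hlim using fun (γ : ℕ → Fin ℓ) (x : X) =>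
    cauchySeq_tendsto_of_complete (hcau γ x)
  refine ⟨hhat, fun γ x => hlim γ x, ?_, ?_⟩
  · -- (b) shift relation
    intro γ x
    have h1 : Filter.Tendsto (fun n => f γ x (n + 1)) Filter.atTop (nhds (hhat γ x)) :=
      (hlim γ x).comp (Filter.tendsto_add_atTop_nat 1)
    have hs : ∀ n : ℕ, seqComp φ (fun m => γ (m + 1)) n (φ (γ 0) x) = seqComp φ γ (n + 1) x := by
      intro n
      induction n with
      | zero => rfl
      | succ n ih => simp [seqComp, ih]
    have h2 : ∀ n : ℕ, f (fun m => γ (m + 1)) (φ (γ 0) x) n = d (γ 0) * f γ x (n + 1) := by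
      intro n
      have hp : (∏ m ∈ Finset.range (n + 1), d (γ m)) =
          (∏ m ∈ Finset.range n, d (γ (m + 1))) * d (γ 0) :=
        Finset.prod_range_succ' _ _
      have hQ : (∏ m ∈ Finset.range n, d (γ (m + 1))) ≠ 0 :=
        ne_of_gt (Finset.prod_pos fun m _ => hdpos _)
      have hd0 : d (γ 0) ≠ 0 := ne_of_gt (hdpos _)
      simp only [hfdef, hs n, hp]
      field_simp
    have h3 : Filter.Tendsto (f (fun m => γ (m + 1)) (φ (γ 0) x)) Filter.atTop
        (nhds (d (γ 0) * hhat γ x)) :=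
      (h1.const_mul (d (γ 0))).congr fun n => (h2 n).symm
    exact tendsto_nhds_unique (hlim _ _) h3
  · -- (c) uniform bound
    intro γ x
    have hb := dist_le_of_le_geometric_of_tendsto₀ r C hr (hstep γ x) (hlim γ x)
    have hf0 : f γ x 0 = h x := by simp [hfdef, seqComp]
    rw [Real.dist_eq, hf0] at hb
    calc |hhat γ x - h x| = |h x - hhat γ x| := abs_sub_comm _ _
      _ ≤ C / (1 - r) := hb
      _ = C / (1 - 1 / D) := by rw [hrdef]
end

section
/- Let k be a number field and let φ be an endomorphism of ℙ^N of degree d ≥ 1 defined over k, i.e., φ is given by N+1 homogeneous polynomials F_0,…,F_N of degree d in k[X_0,…,X_N] having no common zero other than the origin over an algebraic closure of k. Then there exists a constant C ≥ 0 such that |h(φ(P)) − d·h(P)| ≤ C for all P ∈ ℙ^N(k). -/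
open scoped BigOperators

/-! ### Auxiliary lemmas for the proof of height functoriality -/

noncomputable section
namespace HFhelp

variable {k : Type} [Field k]

/-- A real `r > 1` cannot have all its powers bounded by a linear function. -/
lemma pow_not_linearly_bounded {r A B : ℝ} (hr : 1 < r)
    (h : ∀ n : ℕ, 1 ≤ n → r ^ n ≤ A * n + B) : False := by
  set A' := max A 0 with hA'
  set B' := max B 0 with hB'
  have hA0 : 0 ≤ A' := le_max_right _ _
  have hB0 : 0 ≤ B' := le_max_right _ _
  have h' : ∀ n : ℕ, 1 ≤ n → r ^ n ≤ A' * n + B' := fun n hn =>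
    (h n hn).trans (add_le_add (mul_le_mul_of_nonneg_right (le_max_left _ _) (by positivity))
      (le_max_left _ _))
  have hd : 0 < r - 1 := by linarith
  obtain ⟨m, hm⟩ := exists_nat_gt ((2 * A' + B' + 1) / (r - 1) ^ 2)
  set n : ℕ := max m 1 with hn
  have hn1 : 1 ≤ n := le_max_right _ _
  have hnm : (m : ℝ) ≤ n := by exact_mod_cast le_max_left m 1
  have hnR : (2 * A' + B' + 1) / (r - 1) ^ 2 < n := lt_of_lt_of_le hm hnm
  have hnpos : (0 : ℝ) < n := by exact_mod_cast hn1
  have key : 2 * A' + B' + 1 < n * (r - 1) ^ 2 := by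
    rw [div_lt_iff₀ (by positivity)] at hnR
    nlinarith
  have hbern : 1 + (n : ℝ) * (r - 1) ≤ r ^ n := by
    have := one_add_mul_le_pow (a := r - 1) (by linarith) n
    simpa using this
  have h2 : ((n : ℝ) * (r - 1)) ^ 2 ≤ (r ^ n) ^ 2 := by
    apply pow_le_pow_left₀ (by positivity)
    nlinarith
  have h3 : (r ^ n) ^ 2 = r ^ (2 * n) := by rw [← pow_mul, mul_comm]
  have h4 : r ^ (2 * n) ≤ A' * (2 * n) + B' := by
    have := h' (2 * n) (by omega)
    simpa [Nat.cast_mul] using this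
  have h5 : A' * (2 * (n : ℝ)) + B' ≤ (n : ℝ) * (2 * A' + B' + 1) := by
    have hn1R : (1 : ℝ) ≤ (n : ℝ) := by exact_mod_cast hn1
    have h6 : (0 : ℝ) ≤ ((n : ℝ) - 1) * B' := mul_nonneg (by linarith) hB0
    nlinarith
  nlinarith [mul_lt_mul_of_pos_left key hnpos]

/-- An absolute value bounded by `1` on the image of `ℕ` is nonarchimedean. -/
lemma nonarch_of_nat_le (f : AbsoluteValue k ℝ) (hnat : ∀ n : ℕ, f (n : k) ≤ 1)
    (x y : k) : f (x + y) ≤ max (f x) (f y) := by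
  set Mx : ℝ := max (f x) (f y) with hMx
  have hM0 : 0 ≤ Mx := le_max_iff.2 (Or.inl (f.nonneg x))
  by_contra hcon
  push_neg at hcon
  have hkey : ∀ n : ℕ, 1 ≤ n → f (x + y) ^ n ≤ (n + 1) * Mx ^ n := by
    intro n hn
    have hexp : (x + y) ^ n = ∑ i ∈ Finset.range (n + 1), x ^ i * y ^ (n - i) * (n.choose i : k) :=
      add_pow x y n
    calc f (x + y) ^ n = f ((x + y) ^ n) := (f.map_pow _ _).symm
      _ ≤ ∑ i ∈ Finset.range (n + 1), f (x ^ i * y ^ (n - i) * (n.choose i : k)) := by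
          rw [hexp]; exact f.sum_le _ _
      _ ≤ ∑ _i ∈ Finset.range (n + 1), Mx ^ n := by
          apply Finset.sum_le_sum
          intro i hi
          rw [Finset.mem_range] at hi
          have h1 : f (x ^ i * y ^ (n - i) * (n.choose i : k))
              = f x ^ i * f y ^ (n - i) * f (n.choose i : k) := by
            rw [f.map_mul, f.map_mul, f.map_pow, f.map_pow]
          rw [h1]
          have h2 : f x ^ i * f y ^ (n - i) ≤ Mx ^ i * Mx ^ (n - i) :=
            mul_le_mul (pow_le_pow_left₀ (f.nonneg x) (le_max_left _ _) i)
              (pow_le_pow_left₀ (f.nonneg y) (le_max_right _ _) _) (by positivity) (by positivity)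
          have h3 : Mx ^ i * Mx ^ (n - i) = Mx ^ n := by
            rw [← pow_add]; congr 1; omega
          calc f x ^ i * f y ^ (n - i) * f (n.choose i : k)
              ≤ f x ^ i * f y ^ (n - i) * 1 :=
                mul_le_mul_of_nonneg_left (hnat _) (by positivity)
            _ = f x ^ i * f y ^ (n - i) := mul_one _
            _ ≤ Mx ^ n := h3 ▸ h2
      _ = (n + 1) * Mx ^ n := by rw [Finset.sum_const, Finset.card_range]; push_cast; ring
  rcases eq_or_lt_of_le hM0 with hM | hM
  · have hx : x = 0 := by
      have : f x ≤ 0 := le_trans (le_max_left (f x) (f y)) hM.symm.le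
      exact f.eq_zero.1 (le_antisymm this (f.nonneg x))
    have hy : y = 0 := by
      have : f y ≤ 0 := le_trans (le_max_right (f x) (f y)) hM.symm.le
      exact f.eq_zero.1 (le_antisymm this (f.nonneg y))
    rw [hx, hy, add_zero, map_zero] at hcon
    exact absurd hcon (not_lt.2 hM0)
  · set r : ℝ := f (x + y) / Mx with hr
    have hr1 : 1 < r := (one_lt_div hM).2 hcon
    apply pow_not_linearly_bounded (A := 1) (B := 2) hr1
    intro n hn
    have hrn : r ^ n = f (x + y) ^ n / Mx ^ n := by rw [hr, div_pow]
    rw [hrn, div_le_iff₀ (by positivity)]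
    calc f (x + y) ^ n ≤ (n + 1) * Mx ^ n := hkey n hn
      _ ≤ (1 * n + 2) * Mx ^ n :=
          mul_le_mul_of_nonneg_right (by norm_num) (by positivity)

lemma abs_nat_le_log (f : AbsoluteValue k ℝ) (h2 : f (2 : k) ≤ 1) :
    ∀ m : ℕ, f (m : k) ≤ Nat.log 2 m + 1 := by
  intro m
  induction m using Nat.strong_induction_on with
  | _ m ih =>
    match m, ih with
    | 0, _ => simp
    | 1, _ => simp
    | (m + 2), ih =>
      set m' := m + 2 with hm'
      have hdecomp : (m' : k) = 2 * ((m' / 2 : ℕ) : k) + ((m' % 2 : ℕ) : k) := by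
        rw [← Nat.cast_ofNat, ← Nat.cast_mul, ← Nat.cast_add]
        congr 1
        omega
      have hrec : f ((m' / 2 : ℕ) : k) ≤ Nat.log 2 (m' / 2) + 1 := ih _ (by omega)
      have hmod : f ((m' % 2 : ℕ) : k) ≤ 1 := by
        rcases Nat.mod_two_eq_zero_or_one m' with h | h <;> rw [h] <;> simp
      have hlog : Nat.log 2 (m' / 2) + 1 = Nat.log 2 m' := by
        rw [Nat.log_div_base]
        have h1 : 0 < Nat.log 2 m' := Nat.log_pos (by norm_num) (by omega)
        omega
      calc f (m' : k) ≤ f (2 * ((m' / 2 : ℕ) : k)) + f ((m' % 2 : ℕ) : k) := by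
            rw [hdecomp]; exact f.add_le _ _
        _ ≤ 1 * (Nat.log 2 (m' / 2) + 1) + 1 := by
            rw [f.map_mul]
            exact add_le_add (mul_le_mul h2 hrec (f.nonneg _) zero_le_one) hmod
        _ = (Nat.log 2 (m' / 2) + 1 : ℕ) + 1 := by push_cast; ring
        _ = Nat.log 2 m' + 1 := by rw [hlog]

lemma one_lt_abs_two_of_exists (f : AbsoluteValue k ℝ) {n : ℕ} (hn : 1 < f (n : k)) :
    1 < f (2 : k) := by
  by_contra h2
  push_neg at h2
  have hb := abs_nat_le_log f h2
  apply pow_not_linearly_bounded (r := f (n : k)) (A := (Nat.log 2 n + 1 : ℕ)) (B := 1) hn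
  intro j hj
  calc f (n : k) ^ j = f ((n : k) ^ j) := (f.map_pow _ _).symm
    _ = f ((n ^ j : ℕ) : k) := by push_cast; ring_nf
    _ ≤ Nat.log 2 (n ^ j) + 1 := hb _
    _ ≤ (((Nat.log 2 n + 1) * j : ℕ) : ℝ) + 1 := by
        have hnn : n ^ j ≤ (2 ^ (Nat.log 2 n + 1)) ^ j := by
          apply Nat.pow_le_pow_left
          rcases Nat.eq_zero_or_pos n with h0 | h0
          · simp [h0]
          · exact (Nat.lt_pow_succ_log_self (by norm_num) n).le
        have hmono := Nat.log_mono_right (b := 2) hnn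
        rw [← Nat.pow_mul, Nat.log_pow (by norm_num)] at hmono
        exact_mod_cast Nat.add_le_add_right hmono 1
    _ = (Nat.log 2 n + 1 : ℕ) * j + 1 := by push_cast; ring

open PlaceFamily

variable (M : PlaceFamily k)

/-- All but finitely many places of a place family on a field of characteristic zero
are nonarchimedean. -/
lemma finite_arch [CharZero k] : {v : M.V | ¬ M.NonarchAt v}.Finite := by
  apply Set.Finite.subset (M.finite_support (2 : k) two_ne_zero)
  intro v hv
  simp only [Set.mem_setOf_eq] at hv ⊢
  have hex : ∃ n : ℕ, 1 < M.av v (n : k) := by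
    by_contra hc
    push_neg at hc
    exact hv (nonarch_of_nat_le (M.av v) hc)
  obtain ⟨n, hn⟩ := hex
  exact ne_of_gt (one_lt_abs_two_of_exists (M.av v) hn)

variable {N : ℕ}

lemma le_maxAbs (v : M.V) (a : Fin (N + 1) → k) (j : Fin (N + 1)) :
    M.av v (a j) ≤ M.maxAbs v a := by
  rw [PlaceFamily.maxAbs]
  exact Finset.le_sup' (fun j => M.av v (a j)) (Finset.mem_univ j)

lemma maxAbs_nonneg (v : M.V) (a : Fin (N + 1) → k) : 0 ≤ M.maxAbs v a :=
  le_trans ((M.av v).nonneg (a 0)) (le_maxAbs M v a 0)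

lemma maxAbs_le {v : M.V} {a : Fin (N + 1) → k} {C : ℝ}
    (h : ∀ j, M.av v (a j) ≤ C) : M.maxAbs v a ≤ C := by
  rw [PlaceFamily.maxAbs]
  exact Finset.sup'_le _ _ fun j _ => h j

lemma exists_maxAbs_eq (v : M.V) (a : Fin (N + 1) → k) :
    ∃ j, M.maxAbs v a = M.av v (a j) := by
  rw [PlaceFamily.maxAbs]
  obtain ⟨j, _, hj⟩ := Finset.exists_mem_eq_sup' (⟨0, Finset.mem_univ 0⟩ :
    (Finset.univ : Finset (Fin (N + 1))).Nonempty) fun j => M.av v (a j)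
  exact ⟨j, hj⟩

lemma maxAbs_pos (v : M.V) {a : Fin (N + 1) → k} (ha : a ≠ 0) : 0 < M.maxAbs v a := by
  obtain ⟨j, hj⟩ := Function.ne_iff.1 ha
  exact lt_of_lt_of_le ((M.av v).pos hj) (le_maxAbs M v a j)

lemma nonarch_sum {ι : Type*} {v : M.V} (hv : M.NonarchAt v) (s : Finset ι) (g : ι → k)
    {C : ℝ} (hC : 0 ≤ C) (hg : ∀ i ∈ s, M.av v (g i) ≤ C) :
    M.av v (∑ i ∈ s, g i) ≤ C := by
  classical
  induction s using Finset.induction_on with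
  | empty => simpa using hC
  | @insert i s hi ih =>
    rw [Finset.sum_insert hi]
    refine le_trans (hv _ _) (max_le (hg i (Finset.mem_insert_self i s)) ?_)
    exact ih fun j hj => hg j (Finset.mem_insert_of_mem hj)

lemma monomial_eval_le (v : M.V) (a : Fin (N + 1) → k) {n : ℕ} (d : Fin (N + 1) →₀ ℕ)
    (hd : d.degree = n) : M.av v (∏ i, a i ^ d i) ≤ M.maxAbs v a ^ n := by
  have h1 : M.av v (∏ i, a i ^ d i) = ∏ i, M.av v (a i) ^ d i := by
    rw [map_prod]
    exact Finset.prod_congr rfl fun i _ => (M.av v).map_pow _ _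
  rw [h1]
  have h2 : ∏ i, M.av v (a i) ^ d i ≤ ∏ i, M.maxAbs v a ^ d i := by
    apply Finset.prod_le_prod
    · intro i _; positivity
    · intro i _
      exact pow_le_pow_left₀ ((M.av v).nonneg _) (le_maxAbs M v a i) _
  refine h2.trans (le_of_eq ?_)
  rw [Finset.prod_pow_eq_pow_sum]
  congr 1
  rw [← hd, Finsupp.degree]
  exact (Finset.sum_subset (Finset.subset_univ _)
    (fun i _ hi => Finsupp.notMem_support_iff.1 hi)).symm

lemma eval_le (v : M.V) {p : MvPolynomial (Fin (N + 1)) k} {n : ℕ}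
    (hp : p.IsHomogeneous n) (a : Fin (N + 1) → k) :
    M.av v (MvPolynomial.eval a p) ≤
      (∑ d ∈ p.support, M.av v (MvPolynomial.coeff d p)) * M.maxAbs v a ^ n := by
  rw [MvPolynomial.eval_eq']
  calc M.av v (∑ d ∈ p.support, MvPolynomial.coeff d p * ∏ i, a i ^ d i)
      ≤ ∑ d ∈ p.support, M.av v (MvPolynomial.coeff d p * ∏ i, a i ^ d i) :=
        (M.av v).sum_le _ _
    _ ≤ ∑ d ∈ p.support, M.av v (MvPolynomial.coeff d p) * M.maxAbs v a ^ n := by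
        apply Finset.sum_le_sum
        intro d hd
        rw [(M.av v).map_mul]
        apply mul_le_mul_of_nonneg_left _ ((M.av v).nonneg _)
        apply monomial_eval_le M v a d
        rw [Finsupp.degree_eq_weight_one]
        exact hp (MvPolynomial.mem_support_iff.1 hd)
    _ = _ := by rw [← Finset.sum_mul]

lemma eval_le_nonarch {v : M.V} (hv : M.NonarchAt v) {p : MvPolynomial (Fin (N + 1)) k} {n : ℕ}
    (hp : p.IsHomogeneous n) (hc : ∀ d ∈ p.support, M.av v (MvPolynomial.coeff d p) ≤ 1)
    (a : Fin (N + 1) → k) :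
    M.av v (MvPolynomial.eval a p) ≤ M.maxAbs v a ^ n := by
  rw [MvPolynomial.eval_eq']
  apply nonarch_sum M hv _ _ (pow_nonneg (maxAbs_nonneg M v a) n)
  intro d hd
  rw [(M.av v).map_mul]
  calc M.av v (MvPolynomial.coeff d p) * M.av v (∏ i, a i ^ d i)
      ≤ 1 * (M.maxAbs v a ^ n) := by
        apply mul_le_mul (hc d hd) (monomial_eval_le M v a d ?_) ((M.av v).nonneg _) zero_le_one
        rw [Finsupp.degree_eq_weight_one]
        exact hp (MvPolynomial.mem_support_iff.1 hd)
    _ = _ := one_mul _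

lemma height_support_finite {a : Fin (N + 1) → k} (ha : a ≠ 0) :
    (Function.support fun v => Real.log (M.maxAbs v a)).Finite := by
  have hsub : (Function.support fun v => Real.log (M.maxAbs v a)) ⊆
      ⋃ j ∈ {j : Fin (N + 1) | a j ≠ 0}, {v : M.V | M.av v (a j) ≠ 1} := by
    intro v hv
    rw [Function.mem_support] at hv
    have hne : M.maxAbs v a ≠ 1 := fun h => hv (by rw [h, Real.log_one])
    obtain ⟨j0, hj0⟩ := Function.ne_iff.1 ha
    rcases eq_or_ne (M.av v (a j0)) 1 with h1 | h1
    · obtain ⟨j, hj⟩ := exists_maxAbs_eq M v a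
      have hgt : 1 < M.maxAbs v a :=
        lt_of_le_of_ne (h1 ▸ le_maxAbs M v a j0) (Ne.symm hne)
      have haj : a j ≠ 0 := by
        intro h0
        rw [hj, h0, map_zero] at hgt
        linarith
      exact Set.mem_biUnion haj (by simpa using (hj ▸ hne : M.av v (a j) ≠ 1))
    · exact Set.mem_biUnion hj0 h1
  exact Set.Finite.subset
    (Set.Finite.biUnion (Set.toFinite _) fun j hj => M.finite_support _ hj) hsub

section Qmap

open MvPolynomial

variable {σ : Type} [Fintype σ] [DecidableEq σ]

/-- Coefficientwise application of a `k`-linear retraction `K → k`. -/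
def Qmap {K : Type*} [Field K] [Algebra k K] (g : K →ₗ[k] k)
    (p : MvPolynomial σ K) : MvPolynomial σ k :=
  ∑ d ∈ p.support, monomial d (g (coeff d p))

variable {K : Type*} [Field K] [Algebra k K] (g : K →ₗ[k] k)

omit [Fintype σ] in
lemma coeff_Qmap (p : MvPolynomial σ K) (d : σ →₀ ℕ) :
    coeff d (Qmap g p) = g (coeff d p) := by
  rw [Qmap, coeff_sum]
  simp only [coeff_monomial]
  rw [Finset.sum_ite_eq' p.support d (fun d' => g (coeff d' p))]
  split_ifs with h
  · rfl
  · rw [notMem_support_iff.1 h, map_zero]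

omit [Fintype σ] in
lemma Qmap_add (p q : MvPolynomial σ K) : Qmap g (p + q) = Qmap g p + Qmap g q := by
  apply MvPolynomial.ext
  intro d
  simp [coeff_Qmap, coeff_add, map_add]

omit [Fintype σ] in
lemma Qmap_zero : Qmap g (0 : MvPolynomial σ K) = 0 := by
  simp [Qmap]

omit [Fintype σ] in
lemma Qmap_sum {ι : Type*} (s : Finset ι) (F : ι → MvPolynomial σ K) :
    Qmap g (∑ i ∈ s, F i) = ∑ i ∈ s, Qmap g (F i) := by
  classical
  induction s using Finset.induction_on with
  | empty => simpa using Qmap_zero g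
  | @insert i s hi ih => rw [Finset.sum_insert hi, Finset.sum_insert hi, Qmap_add, ih]

omit [Fintype σ] in
lemma Qmap_X_mul (i : σ) (p : MvPolynomial σ K) :
    Qmap g (X i * p) = X i * Qmap g p := by
  apply MvPolynomial.ext
  intro d
  rw [coeff_Qmap, coeff_X_mul', coeff_X_mul']
  split_ifs with h
  · rw [coeff_Qmap]
  · rw [map_zero]

omit [Fintype σ] in
lemma Qmap_map_mul (H : MvPolynomial σ k) (A : MvPolynomial σ K) :
    Qmap g (map (algebraMap k K) H * A) = H * Qmap g A := by
  induction H using MvPolynomial.induction_on generalizing A with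
  | C c =>
    apply MvPolynomial.ext
    intro d
    rw [coeff_Qmap, map_C, coeff_C_mul, coeff_C_mul, coeff_Qmap]
    rw [← Algebra.smul_def, map_smul]
    rfl
  | add p q hp hq =>
    rw [map_add, add_mul, Qmap_add, hp, hq, add_mul]
  | mul_X p i hp =>
    have h1 : map (algebraMap k K) (p * X i) * A = map (algebraMap k K) p * (X i * A) := by
      rw [map_mul, map_X]; ring
    rw [h1, hp, Qmap_X_mul, ← mul_assoc]

omit [Fintype σ] in
lemma Qmap_map (hg : ∀ c : k, g (algebraMap k K c) = c) (H : MvPolynomial σ k) :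
    Qmap g (map (algebraMap k K) H) = H := by
  apply MvPolynomial.ext
  intro d
  rw [coeff_Qmap, coeff_map, hg]

/-- Extracting a homogeneous component from a product with a homogeneous polynomial. -/
lemma homComp_mul_homog {F G : MvPolynomial σ k} {d E : ℕ} (hF : F.IsHomogeneous d)
    (hdE : d ≤ E) :
    homogeneousComponent E (F * G) = F * homogeneousComponent (E - d) G := by
  conv_lhs => rw [← sum_homogeneousComponent G, Finset.mul_sum, map_sum]
  have hterm : ∀ m : ℕ, homogeneousComponent E (F * homogeneousComponent m G)
      = if m = E - d then F * homogeneousComponent m G else 0 := by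
    intro m
    have hhom : (F * homogeneousComponent m G).IsHomogeneous (d + m) :=
      hF.mul (homogeneousComponent_isHomogeneous m G)
    rw [homogeneousComponent_of_mem ((mem_homogeneousSubmodule _ _).2 hhom)]
    exact if_congr (show (E = d + m) ↔ (m = E - d) by omega) rfl rfl
  simp only [hterm]
  rw [Finset.sum_ite_eq' (Finset.range _) (E - d)
    (fun m => F * homogeneousComponent m G)]
  split_ifs with h
  · rfl
  · rw [homogeneousComponent_eq_zero, mul_zero]
    rw [Finset.mem_range, not_lt] at h
    omega

end Qmap

open MvPolynomial in
/-- The homogeneous Nullstellensatz over `k` for the coordinates of a projective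
endomorphism: some power of each variable is in the ideal generated by the
coordinate polynomials, with homogeneous coefficients defined over `k`. -/
lemma exists_nss (φ : ProjEndo k N) (hd : 1 ≤ φ.deg) :
    ∃ (E : ℕ) (H : Fin (N + 1) → Fin (N + 1) → MvPolynomial (Fin (N + 1)) k),
      φ.deg ≤ E ∧ 1 ≤ E ∧ (∀ j i, (H j i).IsHomogeneous (E - φ.deg)) ∧
      ∀ j, (X j : MvPolynomial (Fin (N + 1)) k) ^ E = ∑ i, H j i * φ.coord i := by
  classical
  set K := AlgebraicClosure k
  set f := algebraMap k K with hf
  set I : Ideal (MvPolynomial (Fin (N + 1)) K) :=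
    Ideal.span (Set.range fun i => map f (φ.coord i)) with hI
  have hzero : ∀ x ∈ zeroLocus K I, x = 0 := by
    intro x hx
    apply φ.no_common_zero
    intro j
    exact mem_zeroLocus_iff.1 hx _ (Ideal.subset_span ⟨j, rfl⟩)
  have hX : ∀ j, (X j : MvPolynomial (Fin (N + 1)) K) ∈ I.radical := by
    intro j
    rw [← vanishingIdeal_zeroLocus_eq_radical (K := K)]
    intro x hx
    rw [aeval_X, hzero x hx]
    rfl
  choose e he using fun j => Ideal.mem_radical_iff.1 (hX j)
  set E : ℕ := Finset.univ.sup e + φ.deg with hE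
  have hdE : φ.deg ≤ E := Nat.le_add_left _ _
  have hE1 : 1 ≤ E := le_trans hd hdE
  have heE : ∀ j, e j ≤ E := fun j =>
    le_trans (Finset.le_sup (Finset.mem_univ j)) (Nat.le_add_right _ _)
  have hXE : ∀ j, (X j : MvPolynomial (Fin (N + 1)) K) ^ E ∈ I := by
    intro j
    have h1 : (X j : MvPolynomial (Fin (N + 1)) K) ^ E
        = X j ^ (E - e j) * X j ^ e j := by
      rw [← pow_add]
      congr 1
      have := heE j
      omega
    rw [h1]
    exact Ideal.mul_mem_left _ _ (he j)
  have hrep : ∀ j, ∃ c : Fin (N + 1) → MvPolynomial (Fin (N + 1)) K,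
      ∑ i, c i * map f (φ.coord i) = X j ^ E := by
    intro j
    obtain ⟨c, hc⟩ := (Submodule.mem_span_range_iff_exists_fun _).1 (hXE j)
    exact ⟨c, by simpa [smul_eq_mul] using hc⟩
  choose A hA using hrep
  obtain ⟨g, hg⟩ := LinearMap.exists_leftInverse_of_injective (Algebra.linearMap k K)
    (LinearMap.ker_eq_bot.2 (algebraMap k K).injective)
  have hgc : ∀ c : k, g (algebraMap k K c) = c := fun c => by
    have := LinearMap.congr_fun hg c
    simpa using this
  have hk : ∀ j, (X j : MvPolynomial (Fin (N + 1)) k) ^ E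
      = ∑ i, φ.coord i * Qmap g (A j i) := by
    intro j
    have h1 : Qmap g ((X j : MvPolynomial (Fin (N + 1)) K) ^ E) = X j ^ E := by
      rw [show ((X j : MvPolynomial (Fin (N + 1)) K) ^ E)
          = map f ((X j : MvPolynomial (Fin (N + 1)) k) ^ E) by rw [map_pow, map_X]]
      exact Qmap_map g hgc _
    rw [← h1, ← hA j, Qmap_sum]
    refine Finset.sum_congr rfl fun i _ => ?_
    rw [mul_comm (A j i), Qmap_map_mul g]
  refine ⟨E, fun j i => homogeneousComponent (E - φ.deg) (Qmap g (A j i)), hdE, hE1,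
    fun j i => homogeneousComponent_isHomogeneous _ _, fun j => ?_⟩
  have h2 : homogeneousComponent E ((X j : MvPolynomial (Fin (N + 1)) k) ^ E)
      = X j ^ E := by
    rw [homogeneousComponent_of_mem
      ((mem_homogeneousSubmodule _ _).2 (isHomogeneous_X_pow j E (R := k)))]
    simp
  calc (X j : MvPolynomial (Fin (N + 1)) k) ^ E
      = homogeneousComponent E (X j ^ E) := h2.symm
    _ = homogeneousComponent E (∑ i, φ.coord i * Qmap g (A j i)) := by rw [← hk j]
    _ = ∑ i, homogeneousComponent E (φ.coord i * Qmap g (A j i)) := map_sum _ _ _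
    _ = ∑ i, φ.coord i * homogeneousComponent (E - φ.deg) (Qmap g (A j i)) :=
        Finset.sum_congr rfl fun i _ => homComp_mul_homog (φ.homogeneous i) hdE
    _ = ∑ i, homogeneousComponent (E - φ.deg) (Qmap g (A j i)) * φ.coord i :=
        Finset.sum_congr rfl fun i _ => mul_comm _ _

end HFhelp
end

/-- **Height functoriality for endomorphisms of `ℙ^N`.**
Let `k` be a number field and `φ` an endomorphism of `ℙ^N` of degree `d ≥ 1` defined
over `k` (given by `N + 1` homogeneous polynomials of degree `d` with no common
nontrivial zero over an algebraic closure of `k`).  Then there is a constant `C ≥ 0`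
with `|h(φ(P)) − d·h(P)| ≤ C` for all `P ∈ ℙ^N(k)`. -/
theorem height_functoriality_endomorphism
    {k : Type} [Field k] [NumberField k] (M : PlaceFamily k)
    {N : ℕ} (φ : ProjEndo k N) (hd : 1 ≤ φ.deg) :
    ∃ C : ℝ, 0 ≤ C ∧ ∀ a : Fin (N + 1) → k, a ≠ 0 →
      |M.height (φ.app a) - (φ.deg : ℝ) * M.height a| ≤ C := by
  classical
  obtain ⟨E, H, hdE, hE1, hHhom, hid⟩ := HFhelp.exists_nss φ hd
  -- the finite set of relevant coefficients
  set CF : Finset k := Finset.univ.biUnion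
    (fun j => (φ.coord j).support.image fun m => MvPolynomial.coeff m (φ.coord j)) with hCF
  set CH : Finset k := Finset.univ.biUnion (fun j => Finset.univ.biUnion
    (fun i => (H j i).support.image fun m => MvPolynomial.coeff m (H j i))) with hCH
  set CS : Finset k := (CF ∪ CH).erase 0 with hCS
  have hCSne : ∀ c ∈ CS, c ≠ 0 := fun c hc => (Finset.mem_erase.1 hc).1
  -- the finite bad set of places
  set S : Set M.V := {v | ¬ M.NonarchAt v} ∪ ⋃ c ∈ (CS : Set k), {v | M.av v c ≠ 1} with hS
  have hSfin : S.Finite := Set.Finite.union (HFhelp.finite_arch M)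
    (Set.Finite.biUnion CS.finite_toSet fun c hc => M.finite_support c (hCSne c hc))
  -- membership of coefficients in `CS`
  have hmemF : ∀ (j) (m) (_ : m ∈ (φ.coord j).support), MvPolynomial.coeff m (φ.coord j) ∈ CS := by
    intro j m hm
    refine Finset.mem_erase.2 ⟨MvPolynomial.mem_support_iff.1 hm, Finset.mem_union_left _ ?_⟩
    exact Finset.mem_biUnion.2 ⟨j, Finset.mem_univ j, Finset.mem_image_of_mem _ hm⟩
  have hmemH : ∀ (j i) (m) (_ : m ∈ (H j i).support), MvPolynomial.coeff m (H j i) ∈ CS := by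
    intro j i m hm
    refine Finset.mem_erase.2 ⟨MvPolynomial.mem_support_iff.1 hm, Finset.mem_union_right _ ?_⟩
    exact Finset.mem_biUnion.2 ⟨j, Finset.mem_univ j,
      Finset.mem_biUnion.2 ⟨i, Finset.mem_univ i, Finset.mem_image_of_mem _ hm⟩⟩
  -- the local constants
  set U : M.V → ℝ := fun v =>
    1 + ∑ j, ∑ m ∈ (φ.coord j).support, M.av v (MvPolynomial.coeff m (φ.coord j)) with hU
  set L : M.V → ℝ := fun v =>
    1 + ∑ j, ∑ i, ∑ m ∈ (H j i).support, M.av v (MvPolynomial.coeff m (H j i)) with hL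
  have hU1 : ∀ v, 1 ≤ U v := by
    intro v
    have : (0:ℝ) ≤ ∑ j, ∑ m ∈ (φ.coord j).support, M.av v (MvPolynomial.coeff m (φ.coord j)) :=
      Finset.sum_nonneg fun j _ => Finset.sum_nonneg fun m _ => (M.av v).nonneg _
    simp only [hU]; linarith
  have hL1 : ∀ v, 1 ≤ L v := by
    intro v
    have : (0:ℝ) ≤ ∑ j, ∑ i, ∑ m ∈ (H j i).support, M.av v (MvPolynomial.coeff m (H j i)) :=
      Finset.sum_nonneg fun j _ => Finset.sum_nonneg fun i _ =>
        Finset.sum_nonneg fun m _ => (M.av v).nonneg _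
    simp only [hL]; linarith
  have hU0 : ∀ v, (0:ℝ) < U v := fun v => lt_of_lt_of_le one_pos (hU1 v)
  have hL0 : ∀ v, (0:ℝ) < L v := fun v => lt_of_lt_of_le one_pos (hL1 v)
  refine ⟨∑ v ∈ hSfin.toFinset, (Real.log (U v) + Real.log (L v)), ?_, ?_⟩
  · exact Finset.sum_nonneg fun v _ =>
      add_nonneg (Real.log_nonneg (hU1 v)) (Real.log_nonneg (hL1 v))
  intro a ha
  -- the image does not vanish
  have hFa : φ.app a ≠ 0 := by
    intro h0
    apply ha
    funext j
    have h1 : MvPolynomial.eval a ((MvPolynomial.X j : MvPolynomial (Fin (N + 1)) k) ^ E) = 0 := by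
      rw [hid j, map_sum]
      apply Finset.sum_eq_zero
      intro i _
      have h2 : MvPolynomial.eval a (φ.coord i) = 0 := by
        have := congrFun h0 i
        simpa [ProjEndo.app] using this
      rw [map_mul, h2, mul_zero]
    rw [map_pow, MvPolynomial.eval_X] at h1
    exact (pow_eq_zero_iff (by omega)).1 h1
  have hma : ∀ v, 0 < M.maxAbs v a := fun v => HFhelp.maxAbs_pos M v ha
  have hmF : ∀ v, 0 < M.maxAbs v (φ.app a) := fun v => HFhelp.maxAbs_pos M v hFa
  -- upper bound at each place
  have hub : ∀ v, M.maxAbs v (φ.app a) ≤ U v * M.maxAbs v a ^ φ.deg := by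
    intro v
    apply HFhelp.maxAbs_le M
    intro j
    have h1 := HFhelp.eval_le M v (φ.homogeneous j) a
    refine le_trans h1 (mul_le_mul_of_nonneg_right ?_ (pow_nonneg (HFhelp.maxAbs_nonneg M v a) _))
    have h2 : ∑ m ∈ (φ.coord j).support, M.av v (MvPolynomial.coeff m (φ.coord j))
        ≤ ∑ j', ∑ m ∈ (φ.coord j').support, M.av v (MvPolynomial.coeff m (φ.coord j')) :=
      Finset.single_le_sum
        (f := fun j' => ∑ m ∈ (φ.coord j').support, M.av v (MvPolynomial.coeff m (φ.coord j')))
        (fun j' _ => Finset.sum_nonneg fun m _ => (M.av v).nonneg _) (Finset.mem_univ j)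
    simp only [hU]; linarith
  -- lower bound at each place
  have hlb : ∀ v, M.maxAbs v a ^ φ.deg ≤ L v * M.maxAbs v (φ.app a) := by
    intro v
    obtain ⟨j, hj⟩ := HFhelp.exists_maxAbs_eq M v a
    have h1 : M.maxAbs v a ^ E
        ≤ (∑ i, (∑ m ∈ (H j i).support, M.av v (MvPolynomial.coeff m (H j i))))
            * (M.maxAbs v a ^ (E - φ.deg) * M.maxAbs v (φ.app a)) := by
      have h2 : M.maxAbs v a ^ E = M.av v (MvPolynomial.eval a
          ((MvPolynomial.X j : MvPolynomial (Fin (N + 1)) k) ^ E)) := by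
        rw [map_pow, MvPolynomial.eval_X, (M.av v).map_pow, hj]
      rw [h2, hid j, map_sum]
      calc M.av v (∑ i, MvPolynomial.eval a (H j i * φ.coord i))
          ≤ ∑ i, M.av v (MvPolynomial.eval a (H j i * φ.coord i)) := (M.av v).sum_le _ _
        _ ≤ ∑ i, (∑ m ∈ (H j i).support, M.av v (MvPolynomial.coeff m (H j i)))
              * (M.maxAbs v a ^ (E - φ.deg) * M.maxAbs v (φ.app a)) := by
            apply Finset.sum_le_sum
            intro i _
            rw [map_mul, (M.av v).map_mul]
            have h3 := HFhelp.eval_le M v (hHhom j i) a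
            have h4 : M.av v (MvPolynomial.eval a (φ.coord i)) ≤ M.maxAbs v (φ.app a) :=
              HFhelp.le_maxAbs M v (φ.app a) i
            calc M.av v (MvPolynomial.eval a (H j i)) * M.av v (MvPolynomial.eval a (φ.coord i))
                ≤ ((∑ m ∈ (H j i).support, M.av v (MvPolynomial.coeff m (H j i)))
                    * M.maxAbs v a ^ (E - φ.deg)) * M.maxAbs v (φ.app a) :=
                  mul_le_mul h3 h4 ((M.av v).nonneg _)
                    (mul_nonneg (Finset.sum_nonneg fun m _ => (M.av v).nonneg _)
                      (pow_nonneg (HFhelp.maxAbs_nonneg M v a) _))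
              _ = _ := by ring
        _ = _ := by rw [← Finset.sum_mul]
    have h5 : (∑ i, (∑ m ∈ (H j i).support, M.av v (MvPolynomial.coeff m (H j i)))) ≤ L v := by
      have h6 : (∑ i, ∑ m ∈ (H j i).support, M.av v (MvPolynomial.coeff m (H j i)))
          ≤ ∑ j', ∑ i, ∑ m ∈ (H j' i).support, M.av v (MvPolynomial.coeff m (H j' i)) :=
        Finset.single_le_sum
          (f := fun j' => ∑ i, ∑ m ∈ (H j' i).support, M.av v (MvPolynomial.coeff m (H j' i)))
          (fun j' _ => Finset.sum_nonneg fun i _ =>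
            Finset.sum_nonneg fun m _ => (M.av v).nonneg _) (Finset.mem_univ j)
      simp only [hL]; linarith
    have h7 : M.maxAbs v a ^ E ≤ M.maxAbs v a ^ (E - φ.deg) * (L v * M.maxAbs v (φ.app a)) := by
      refine le_trans h1 ?_
      have h8 : (0:ℝ) ≤ M.maxAbs v a ^ (E - φ.deg) * M.maxAbs v (φ.app a) :=
        mul_nonneg (pow_nonneg (HFhelp.maxAbs_nonneg M v a) _) (le_of_lt (hmF v))
      calc _ ≤ L v * (M.maxAbs v a ^ (E - φ.deg) * M.maxAbs v (φ.app a)) :=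
            mul_le_mul_of_nonneg_right h5 h8
        _ = _ := by ring
    have h9 : M.maxAbs v a ^ E = M.maxAbs v a ^ (E - φ.deg) * M.maxAbs v a ^ φ.deg :=
      (pow_sub_mul_pow _ hdE).symm
    rw [h9] at h7
    exact le_of_mul_le_mul_left h7 (pow_pos (hma v) _)
  -- at good places the local difference vanishes
  have hgood : ∀ v, v ∉ S →
      Real.log (M.maxAbs v (φ.app a)) - (φ.deg : ℝ) * Real.log (M.maxAbs v a) = 0 := by
    intro v hv
    simp only [hS, Set.mem_union, Set.mem_setOf_eq, not_or] at hv
    obtain ⟨hv1, hv2⟩ := hv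
    rw [not_not] at hv1
    have hcs : ∀ c ∈ CS, M.av v c = 1 := by
      intro c hc
      by_contra hne
      exact hv2 (Set.mem_biUnion (by exact_mod_cast hc) hne)
    have hub' : M.maxAbs v (φ.app a) ≤ M.maxAbs v a ^ φ.deg := by
      apply HFhelp.maxAbs_le M
      intro j
      exact HFhelp.eval_le_nonarch M hv1 (φ.homogeneous j)
        (fun m hm => le_of_eq (hcs _ (hmemF j m hm))) a
    have hlb' : M.maxAbs v a ^ φ.deg ≤ M.maxAbs v (φ.app a) := by
      obtain ⟨j, hj⟩ := HFhelp.exists_maxAbs_eq M v a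
      have h2 : M.maxAbs v a ^ E = M.av v (MvPolynomial.eval a
          ((MvPolynomial.X j : MvPolynomial (Fin (N + 1)) k) ^ E)) := by
        rw [map_pow, MvPolynomial.eval_X, (M.av v).map_pow, hj]
      have h1 : M.maxAbs v a ^ E ≤ M.maxAbs v a ^ (E - φ.deg) * M.maxAbs v (φ.app a) := by
        rw [h2, hid j, map_sum]
        apply HFhelp.nonarch_sum M hv1 _ _
          (mul_nonneg (pow_nonneg (HFhelp.maxAbs_nonneg M v a) _) (le_of_lt (hmF v)))
        intro i _
        rw [map_mul, (M.av v).map_mul]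
        exact mul_le_mul
          (HFhelp.eval_le_nonarch M hv1 (hHhom j i)
            (fun m hm => le_of_eq (hcs _ (hmemH j i m hm))) a)
          (HFhelp.le_maxAbs M v (φ.app a) i) ((M.av v).nonneg _)
          (pow_nonneg (HFhelp.maxAbs_nonneg M v a) _)
      have h9 : M.maxAbs v a ^ E = M.maxAbs v a ^ (E - φ.deg) * M.maxAbs v a ^ φ.deg :=
        (pow_sub_mul_pow _ hdE).symm
      rw [h9] at h1
      exact le_of_mul_le_mul_left h1 (pow_pos (hma v) _)
    have heq : M.maxAbs v (φ.app a) = M.maxAbs v a ^ φ.deg := le_antisymm hub' hlb'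
    rw [heq, Real.log_pow]
    ring
  -- assembling the global estimate
  set g : M.V → ℝ := fun v =>
    Real.log (M.maxAbs v (φ.app a)) - (φ.deg : ℝ) * Real.log (M.maxAbs v a) with hg
  have hsupF := HFhelp.height_support_finite M hFa
  have hsupa := HFhelp.height_support_finite M ha
  have hsupda : (Function.support fun v => (φ.deg : ℝ) * Real.log (M.maxAbs v a)).Finite := by
    apply Set.Finite.subset hsupa
    intro v hv
    rw [Function.mem_support] at hv ⊢
    intro h0
    exact hv (by rw [h0, mul_zero])
  have hdiff : M.height (φ.app a) - (φ.deg : ℝ) * M.height a = ∑ᶠ v, g v := by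
    rw [PlaceFamily.height, PlaceFamily.height, mul_finsum _ _,
      ← finsum_sub_distrib hsupF hsupda]
  have hgsupp : Function.support g ⊆ ↑hSfin.toFinset := by
    rw [Set.Finite.coe_toFinset]
    intro v hv
    rw [Function.mem_support] at hv
    by_contra hvS
    exact hv (hgood v hvS)
  rw [hdiff, finsum_eq_finset_sum_of_support_subset g hgsupp]
  refine le_trans (Finset.abs_sum_le_sum_abs _ _) (Finset.sum_le_sum ?_)
  intro v _
  rw [abs_le]
  have hlogU : (0:ℝ) ≤ Real.log (U v) := Real.log_nonneg (hU1 v)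
  have hlogL : (0:ℝ) ≤ Real.log (L v) := Real.log_nonneg (hL1 v)
  constructor
  · -- lower bound on g v
    have h1 : (φ.deg : ℝ) * Real.log (M.maxAbs v a) ≤ Real.log (L v)
        + Real.log (M.maxAbs v (φ.app a)) := by
      have h2 : Real.log (M.maxAbs v a ^ φ.deg) ≤ Real.log (L v * M.maxAbs v (φ.app a)) :=
        Real.log_le_log (pow_pos (hma v) _) (hlb v)
      rw [Real.log_pow, Real.log_mul (ne_of_gt (hL0 v)) (ne_of_gt (hmF v))] at h2
      exact h2
    simp only [hg]
    linarith
  · -- upper bound on g v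
    have h1 : Real.log (M.maxAbs v (φ.app a)) ≤ Real.log (U v)
        + (φ.deg : ℝ) * Real.log (M.maxAbs v a) := by
      have h2 : Real.log (M.maxAbs v (φ.app a)) ≤ Real.log (U v * M.maxAbs v a ^ φ.deg) :=
        Real.log_le_log (hmF v) (hub v)
      rw [Real.log_mul (ne_of_gt (hU0 v)) (ne_of_gt (pow_pos (hma v) _)),
        Real.log_pow] at h2
      exact h2
    simp only [hg]
    linarith
end
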